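/- Let p be a prime and G a metabelian p-group of order p^n of maximal class with n > 5. Suppose G does not possess an abelian subgroup of index p. (a) If G possesses a subgroup T with |G : T| = p and |T : Z(T)| = p^2, then CD(G) is exactly the set of subgroups H with Z(T) ≤ H ≤ T; this set consists of Z(T), T, and exactly p+1 abelian subgroups of order p^{n-2}, one of which is the derived subgroup G', and none of the p+1 abelian members other than G' is normal in G. (b) If G does not possess such a subgroup T, then CD(G) = {G'}. -/

import Mathlib

/-- The Chermak-Delgado measure of a subgroup `H` of `G`: `|H| · |C_G(H)|`. -/
noncomputable def cdMeasure (G : Type*) [Group G] (H : Subgroup G) : ℕ :=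
  Nat.card H * Nat.card (Subgroup.centralizer (H : Set G))

/-- The Chermak-Delgado lattice of `G`: the set of subgroups whose
Chermak-Delgado measure is maximal. -/
def CD (G : Type*) [Group G] : Set (Subgroup G) :=
  {H : Subgroup G | ∀ K : Subgroup G, cdMeasure G K ≤ cdMeasure G H}

/-- The center of a subgroup `T` of `G`, regarded as a subgroup of `G`. -/
def centerIn {G : Type*} [Group G] (T : Subgroup G) : Subgroup G :=
  (Subgroup.center T).map T.subtype

open scoped commutatorElement

namespace CDAux

open Subgroup

variable {G : Type*} [Group G]

lemma normal_of_le_center' {Q : Type*} [Group Q] {S : Subgroup Q}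
    (h : S ≤ Subgroup.center Q) : S.Normal := by
  constructor
  intro x hx g
  have hc := Subgroup.mem_center_iff.mp (h hx) g⁻¹
  have : g * x * g⁻¹ = x := by
    rw [mul_assoc, ← hc]; group
  rw [this]; exact hx

lemma card_lt_of_lt [Finite G] {H K : Subgroup G} (h : H < K) : Nat.card H < Nat.card K := by
  refine lt_of_le_of_ne (Subgroup.card_le_of_le h.le) (fun he => h.ne ?_)
  exact Subgroup.eq_of_le_of_card_ge h.le (le_of_eq he.symm)

lemma card_le_sup_mul_inf [Finite G] (H K : Subgroup G) :
    Nat.card H * Nat.card K ≤ Nat.card ↥(H ⊔ K) * Nat.card ↥(H ⊓ K) := by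
  set L := H ⊔ K with hL
  have hHL : H ≤ L := le_sup_left
  have hKL : K ≤ L := le_sup_right
  have hIL : H ⊓ K ≤ L := le_trans inf_le_left hHL
  have hcH : Nat.card (H.subgroupOf L) = Nat.card H :=
    Nat.card_congr (Subgroup.subgroupOfEquivOfLe hHL).toEquiv
  have hcK : Nat.card (K.subgroupOf L) = Nat.card K :=
    Nat.card_congr (Subgroup.subgroupOfEquivOfLe hKL).toEquiv
  have hcI : Nat.card ((H ⊓ K).subgroupOf L) = Nat.card ↥(H ⊓ K) :=
    Nat.card_congr (Subgroup.subgroupOfEquivOfLe hIL).toEquiv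
  have hinf : (H ⊓ K).subgroupOf L = H.subgroupOf L ⊓ K.subgroupOf L := by
    ext x; simp [Subgroup.mem_subgroupOf]
  have e1 : Nat.card (H.subgroupOf L) * (H.subgroupOf L).index = Nat.card L :=
    Subgroup.card_mul_index _
  have e2 : Nat.card (K.subgroupOf L) * (K.subgroupOf L).index = Nat.card L :=
    Subgroup.card_mul_index _
  have e3 : Nat.card ((H ⊓ K).subgroupOf L) * ((H ⊓ K).subgroupOf L).index = Nat.card L :=
    Subgroup.card_mul_index _
  have hle : ((H ⊓ K).subgroupOf L).index ≤ (H.subgroupOf L).index * (K.subgroupOf L).index := by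
    rw [hinf]; exact Subgroup.index_inf_le
  have hpos : 0 < (H.subgroupOf L).index * (K.subgroupOf L).index := by
    have h1 : (H.subgroupOf L).index ≠ 0 := Subgroup.index_ne_zero_of_finite
    have h2 : (K.subgroupOf L).index ≠ 0 := Subgroup.index_ne_zero_of_finite
    positivity
  refine Nat.le_of_mul_le_mul_right ?_ hpos
  calc Nat.card H * Nat.card K * ((H.subgroupOf L).index * (K.subgroupOf L).index)
      = (Nat.card (H.subgroupOf L) * (H.subgroupOf L).index) *
        (Nat.card (K.subgroupOf L) * (K.subgroupOf L).index) := by rw [hcH, hcK]; ring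
    _ = Nat.card L * Nat.card L := by rw [e1, e2]
    _ ≤ Nat.card L * (Nat.card ((H ⊓ K).subgroupOf L) *
        ((H.subgroupOf L).index * (K.subgroupOf L).index)) := by
        refine Nat.mul_le_mul_left _ ?_
        calc Nat.card ↥L = Nat.card ((H ⊓ K).subgroupOf L) * ((H ⊓ K).subgroupOf L).index := e3.symm
          _ ≤ Nat.card ((H ⊓ K).subgroupOf L) * ((H.subgroupOf L).index * (K.subgroupOf L).index) :=
              Nat.mul_le_mul_left _ hle
    _ = Nat.card ↥(H ⊔ K) * Nat.card ↥(H ⊓ K) * ((H.subgroupOf L).index * (K.subgroupOf L).index) := by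
        rw [hcI]; ring

lemma centralizer_sup' (H K : Subgroup G) :
    Subgroup.centralizer ((H ⊔ K : Subgroup G) : Set G) =
      Subgroup.centralizer (H : Set G) ⊓ Subgroup.centralizer (K : Set G) := by
  apply le_antisymm
  · exact le_inf (Subgroup.centralizer_le (SetLike.coe_subset_coe.mpr le_sup_left))
      (Subgroup.centralizer_le (SetLike.coe_subset_coe.mpr le_sup_right))
  · intro x hx
    rw [Subgroup.mem_centralizer_iff]
    intro h hh
    have hsub : H ⊔ K ≤ Subgroup.centralizer {x} := by
      apply sup_le
      · intro y hy
        rw [Subgroup.mem_centralizer_iff]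
        rintro z rfl
        exact (Subgroup.mem_centralizer_iff.mp hx.1 y hy).symm
      · intro y hy
        rw [Subgroup.mem_centralizer_iff]
        rintro z rfl
        exact (Subgroup.mem_centralizer_iff.mp hx.2 y hy).symm
    exact (Subgroup.mem_centralizer_iff.mp (hsub hh) x rfl).symm

lemma centerIn_eq (T : Subgroup G) : centerIn T = Subgroup.centralizer ↑T ⊓ T := by
  ext x
  rw [Subgroup.mem_inf]
  constructor
  · rintro ⟨y, hy, rfl⟩
    refine ⟨Subgroup.mem_centralizer_iff.mpr ?_, y.2⟩
    intro h hh
    exact congrArg Subtype.val ((Subgroup.mem_center_iff.mp hy) ⟨h, hh⟩)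
  · rintro ⟨hc, hxT⟩
    exact ⟨⟨x, hxT⟩, Subgroup.mem_center_iff.mpr
      (fun g => Subtype.ext (Subgroup.mem_centralizer_iff.mp hc g g.2)), rfl⟩

lemma card_centerIn (T : Subgroup G) :
    Nat.card (centerIn T) = Nat.card (Subgroup.center T) :=
  (Nat.card_congr ((Subgroup.center T).equivMapOfInjective T.subtype T.subtype_injective).toEquiv).symm

lemma isCommutative_of_center_small {p : ℕ} (hp : p.Prime) (S C : Subgroup G) [Finite G]
    (hSC : S ≤ C) (hcent : C ≤ Subgroup.centralizer ↑S)
    (hc : Nat.card C = p * Nat.card S) : IsMulCommutative C := by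
  haveI : Fact p.Prime := ⟨hp⟩
  set S' := S.subgroupOf C with hS'
  have hcardS' : Nat.card S' = Nat.card S :=
    Nat.card_congr (Subgroup.subgroupOfEquivOfLe hSC).toEquiv
  have hScenter : S' ≤ Subgroup.center C := by
    rintro ⟨x, hxC⟩ hx
    rw [Subgroup.mem_subgroupOf] at hx
    rw [Subgroup.mem_center_iff]
    rintro ⟨g, hgC⟩
    exact Subtype.ext (Subgroup.mem_centralizer_iff.mp (hcent hgC) x hx).symm
  haveI hS'norm : S'.Normal := normal_of_le_center' hScenter
  have hidx : S'.index = p := by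
    have h1 := Subgroup.card_mul_index S'
    rw [hcardS', hc] at h1
    have hpos : 0 < Nat.card S := Nat.card_pos
    rw [mul_comm p (Nat.card S)] at h1
    exact Nat.eq_of_mul_eq_mul_left hpos h1
  haveI : IsCyclic (↥C ⧸ S') := isCyclic_of_prime_card (p := p) hidx
  have hcomm := commutative_of_cyclic_center_quotient (QuotientGroup.mk' S')
    (by rw [QuotientGroup.ker_mk']; exact hScenter)
  exact ⟨⟨fun a b => hcomm a b⟩⟩

lemma isCommutative_of_center_index_p {p : ℕ} (hp : p.Prime) (M : Subgroup G)
    (h : (Subgroup.center M).index = p) : IsMulCommutative M := by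
  haveI : Fact p.Prime := ⟨hp⟩
  haveI : IsCyclic (↥M ⧸ Subgroup.center ↥M) :=
    isCyclic_of_prime_card (p := p) (show Nat.card (↥M ⧸ Subgroup.center ↥M) = p from h)
  have hcomm := commutative_of_cyclic_center_quotient
    (QuotientGroup.mk' (Subgroup.center ↥M))
    (le_of_eq (QuotientGroup.ker_mk' (Subgroup.center ↥M)))
  exact ⟨⟨fun a b => hcomm a b⟩⟩

lemma isCommutative_of_center_top (M : Subgroup G)
    (h : Subgroup.center ↥M = ⊤) : IsMulCommutative M := by
  refine ⟨⟨fun a b => ?_⟩⟩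
  exact Subgroup.mem_center_iff.mp (h ▸ Subgroup.mem_top b : b ∈ Subgroup.center ↥M) a

section CDLattice

variable [Finite G]

lemma cdMeasure_pos (H : Subgroup G) : 0 < cdMeasure G H := by
  unfold cdMeasure
  exact Nat.mul_pos Nat.card_pos Nat.card_pos

lemma CD_nonempty : (CD G).Nonempty := by
  obtain ⟨H, hH⟩ := Finite.exists_max (cdMeasure G)
  exact ⟨H, hH⟩

lemma cd_le_sup_mul_inf (H K : Subgroup G) :
    cdMeasure G H * cdMeasure G K ≤ cdMeasure G (H ⊔ K) * cdMeasure G (H ⊓ K) := by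
  unfold cdMeasure
  have h1 := card_le_sup_mul_inf H K
  have h2 := card_le_sup_mul_inf (Subgroup.centralizer (H : Set G)) (Subgroup.centralizer (K : Set G))
  have h3 : Nat.card ↥(Subgroup.centralizer (H : Set G) ⊔ Subgroup.centralizer (K : Set G)) ≤
      Nat.card (Subgroup.centralizer ((H ⊓ K : Subgroup G) : Set G)) := by
    refine Subgroup.card_le_of_le (sup_le ?_ ?_)
    · exact Subgroup.centralizer_le (SetLike.coe_subset_coe.mpr inf_le_left)
    · exact Subgroup.centralizer_le (SetLike.coe_subset_coe.mpr inf_le_right)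
  have h4 : Nat.card ↥(Subgroup.centralizer (H : Set G) ⊓ Subgroup.centralizer (K : Set G)) =
      Nat.card (Subgroup.centralizer ((H ⊔ K : Subgroup G) : Set G)) := by
    rw [centralizer_sup']
  calc Nat.card H * Nat.card (Subgroup.centralizer (H : Set G)) *
        (Nat.card K * Nat.card (Subgroup.centralizer (K : Set G)))
      = Nat.card H * Nat.card K *
        (Nat.card (Subgroup.centralizer (H : Set G)) * Nat.card (Subgroup.centralizer (K : Set G))) := by
        ring
    _ ≤ (Nat.card ↥(H ⊔ K) * Nat.card ↥(H ⊓ K)) *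
        (Nat.card ↥(Subgroup.centralizer (H : Set G) ⊔ Subgroup.centralizer (K : Set G)) *
         Nat.card ↥(Subgroup.centralizer (H : Set G) ⊓ Subgroup.centralizer (K : Set G))) :=
        Nat.mul_le_mul h1 h2
    _ ≤ (Nat.card ↥(H ⊔ K) * Nat.card ↥(H ⊓ K)) *
        (Nat.card (Subgroup.centralizer ((H ⊓ K : Subgroup G) : Set G)) *
         Nat.card (Subgroup.centralizer ((H ⊔ K : Subgroup G) : Set G))) := by
        refine Nat.mul_le_mul_left _ (Nat.mul_le_mul h3 (le_of_eq h4))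
    _ = Nat.card ↥(H ⊔ K) * Nat.card (Subgroup.centralizer ((H ⊔ K : Subgroup G) : Set G)) *
        (Nat.card ↥(H ⊓ K) * Nat.card (Subgroup.centralizer ((H ⊓ K : Subgroup G) : Set G))) := by
        ring

lemma CD_inf_mem {H K : Subgroup G} (hH : H ∈ CD G) (hK : K ∈ CD G) :
    H ⊓ K ∈ CD G := by
  have h1 : cdMeasure G (H ⊔ K) ≤ cdMeasure G H := hH _
  have h2 : cdMeasure G (H ⊓ K) ≤ cdMeasure G H := hH _
  have h3 : cdMeasure G H ≤ cdMeasure G K := hK H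
  have h4 := cd_le_sup_mul_inf H K
  have hab : cdMeasure G H * cdMeasure G H ≤ cdMeasure G (H ⊔ K) * cdMeasure G (H ⊓ K) :=
    le_trans (Nat.mul_le_mul_left _ h3) h4
  have h5 : cdMeasure G (H ⊔ K) * cdMeasure G (H ⊓ K) ≤ cdMeasure G H * cdMeasure G (H ⊓ K) :=
    Nat.mul_le_mul_right _ h1
  have hbM : cdMeasure G (H ⊓ K) = cdMeasure G H := by
    refine le_antisymm h2 ?_
    exact Nat.le_of_mul_le_mul_left (le_trans hab h5) (cdMeasure_pos H)
  intro K'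
  rw [hbM]; exact hH K'

lemma CD_centralizer {H : Subgroup G} (hH : H ∈ CD G) :
    Subgroup.centralizer (H : Set G) ∈ CD G := by
  intro K
  have h : cdMeasure G H ≤ cdMeasure G (Subgroup.centralizer (H : Set G)) := by
    unfold cdMeasure
    rw [mul_comm]
    exact Nat.mul_le_mul_left _
      (Subgroup.card_le_of_le (Subgroup.le_centralizer_iff.mpr le_rfl))
  exact le_trans (hH K) h

lemma CD_min : ∃ A ∈ CD G, IsMulCommutative A ∧
    ∀ H ∈ CD G, A ≤ H ∧ H ≤ Subgroup.centralizer (A : Set G) := by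
  obtain ⟨A, hA, hmin⟩ := Set.exists_min_image (CD G) (fun H => Nat.card H)
    (Set.toFinite _) CD_nonempty
  have hle : ∀ H ∈ CD G, A ≤ H := by
    intro H hH
    have hinf := CD_inf_mem hA hH
    have h1 : Nat.card A ≤ Nat.card ↥(A ⊓ H) := hmin _ hinf
    have h2 : A ⊓ H = A := Subgroup.eq_of_le_of_card_ge inf_le_left h1
    rw [← h2]; exact inf_le_right
  have hcom : IsMulCommutative A :=
    Subgroup.le_centralizer_iff_isMulCommutative.mp (hle _ (CD_centralizer hA))
  exact ⟨A, hA, hcom, fun H hH =>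
    ⟨hle H hH, Subgroup.le_centralizer_iff.mpr (hle _ (CD_centralizer hH))⟩⟩

end CDLattice

section LCS

lemma lcs_eq_bot_of_stab {Q : Type*} [Group Q] {k N : ℕ}
    (h : (⊤ : Subgroup Q).lowerCentralSeries (k + 1) = (⊤ : Subgroup Q).lowerCentralSeries k)
    (hN : (⊤ : Subgroup Q).lowerCentralSeries N = ⊥) : (⊤ : Subgroup Q).lowerCentralSeries k = ⊥ := by
  have key : ∀ j, (⊤ : Subgroup Q).lowerCentralSeries (k + j) = (⊤ : Subgroup Q).lowerCentralSeries k := by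
    intro j
    induction j with
    | zero => rfl
    | succ j ih =>
      have : k + (j + 1) = (k + j) + 1 := by omega
      rw [this, Subgroup.lowerCentralSeries_succ]
      rw [ih, ← Subgroup.lowerCentralSeries_succ, h]
  rcases le_or_gt N k with hNk | hkN
  · exact le_bot_iff.mp (hN ▸ Subgroup.lowerCentralSeries_antitone _ hNk)
  · have hkj : k + (N - k) = N := by omega
    calc (⊤ : Subgroup Q).lowerCentralSeries k = (⊤ : Subgroup Q).lowerCentralSeries (k + (N - k)) := (key (N - k)).symm
      _ = ⊥ := by rw [hkj]; exact hN

lemma pow_dvd_card_lcs {Q : Type*} [Group Q] [Finite Q] {p : ℕ} (hp : p.Prime) {m N K : ℕ}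
    (hQ : Nat.card Q = p ^ m) (hN : (⊤ : Subgroup Q).lowerCentralSeries N = ⊥)
    (hK : (⊤ : Subgroup Q).lowerCentralSeries K ≠ ⊥) :
    ∀ d j, j + d = K → p ^ (d + 1) ∣ Nat.card ((⊤ : Subgroup Q).lowerCentralSeries j) := by
  have hcards : ∀ j, ∃ k ≤ m, Nat.card ((⊤ : Subgroup Q).lowerCentralSeries j) = p ^ k := by
    intro j
    refine (Nat.dvd_prime_pow hp).mp ?_
    rw [← hQ]
    exact Subgroup.card_subgroup_dvd_card _
  have hne : ∀ j ≤ K, (⊤ : Subgroup Q).lowerCentralSeries j ≠ ⊥ := by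
    intro j hj hbot
    exact hK (le_bot_iff.mp (hbot ▸ Subgroup.lowerCentralSeries_antitone _ hj))
  intro d
  induction d with
  | zero =>
    intro j hj
    have hj' : j = K := by omega
    subst hj'
    obtain ⟨k, hk, hck⟩ := hcards j
    have h1 : 1 < Nat.card ((⊤ : Subgroup Q).lowerCentralSeries j) := by
      rcases Nat.lt_or_ge 1 (Nat.card ((⊤ : Subgroup Q).lowerCentralSeries j)) with h | h
      · exact h
      · exfalso
        apply hne j le_rfl
        have : Nat.card ((⊤ : Subgroup Q).lowerCentralSeries j) = 1 := by
          have := Nat.card_pos (α := ((⊤ : Subgroup Q).lowerCentralSeries j)); omega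
        exact Subgroup.eq_bot_of_card_eq _ this
    rw [hck] at h1 ⊢
    have : 1 ≤ k := by
      by_contra hk0
      interval_cases k
      simp at h1
    rw [pow_one]
    exact dvd_pow_self p (by omega)
  | succ d ih =>
    intro j hj
    have h1 := ih (j + 1) (by omega)
    have hstrict : (⊤ : Subgroup Q).lowerCentralSeries (j + 1) < (⊤ : Subgroup Q).lowerCentralSeries j := by
      refine lt_of_le_of_ne (Subgroup.lowerCentralSeries_antitone _ (Nat.le_succ j)) ?_
      intro he
      exact hne j (by omega) (lcs_eq_bot_of_stab he hN)
    have hlt : Nat.card ((⊤ : Subgroup Q).lowerCentralSeries (j + 1)) < Nat.card ((⊤ : Subgroup Q).lowerCentralSeries j) :=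
      CDAux.card_lt_of_lt hstrict
    obtain ⟨a, ha, hca⟩ := hcards j
    obtain ⟨b, hb, hcb⟩ := hcards (j + 1)
    rw [hca]
    rw [hcb] at h1 hlt
    rw [hca] at hlt
    have hble : d + 1 ≤ b := (Nat.pow_dvd_pow_iff_le_right hp.one_lt).mp h1
    have hba : b < a := (Nat.pow_lt_pow_iff_right hp.one_lt).mp hlt
    exact pow_dvd_pow p (by omega)

lemma commutator_index_dvd {Q : Type*} [Group Q] [Finite Q] {p m N : ℕ} (hp : p.Prime)
    (hQ : Nat.card Q = p ^ m) (hN : (⊤ : Subgroup Q).lowerCentralSeries N = ⊥)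
    (h1 : (⊤ : Subgroup Q).lowerCentralSeries 1 ≠ ⊥) : p ^ 2 ∣ ((⊤ : Subgroup Q).lowerCentralSeries 1).index := by
  haveI : Fact p.Prime := ⟨hp⟩
  have hdvd : ((⊤ : Subgroup Q).lowerCentralSeries 1).index ∣ p ^ m := by
    rw [← hQ]
    exact ⟨Nat.card ((⊤ : Subgroup Q).lowerCentralSeries 1), by
      rw [mul_comm]; exact (Subgroup.card_mul_index _).symm⟩
  obtain ⟨j, hjm, hj⟩ := (Nat.dvd_prime_pow hp).mp hdvd
  rw [hj]
  have hj2 : 2 ≤ j := by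
    by_contra hj2
    interval_cases j
    · -- index 1 : lcs 1 = ⊤
      rw [pow_zero] at hj
      have htop : (⊤ : Subgroup Q).lowerCentralSeries 1 = ⊤ := Subgroup.index_eq_one.mp hj
      have : (⊤ : Subgroup Q).lowerCentralSeries 0 = ⊥ := by
        refine lcs_eq_bot_of_stab ?_ hN
        rw [htop, Subgroup.lowerCentralSeries_zero]
      exact h1 (le_bot_iff.mp (this ▸ Subgroup.lowerCentralSeries_antitone _ (Nat.zero_le 1)))
    · -- index p : quotient cyclic
      rw [pow_one] at hj
      haveI : IsCyclic (Q ⧸ (⊤ : Subgroup Q).lowerCentralSeries 1) := isCyclic_of_prime_card (p := p) hj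
      have h21 : (⊤ : Subgroup Q).lowerCentralSeries 2 ≤ (⊤ : Subgroup Q).lowerCentralSeries 1 :=
        Subgroup.lowerCentralSeries_antitone _ (by omega)
      set f : (Q ⧸ (⊤ : Subgroup Q).lowerCentralSeries 2) →* (Q ⧸ (⊤ : Subgroup Q).lowerCentralSeries 1) :=
        QuotientGroup.map _ _ (MonoidHom.id Q) (le_of_le_of_eq h21 (Subgroup.comap_id _).symm) with hf
      have hker : f.ker ≤ Subgroup.center (Q ⧸ (⊤ : Subgroup Q).lowerCentralSeries 2) := by
        rintro q hq
        obtain ⟨x, rfl⟩ := QuotientGroup.mk_surjective q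
        have hx : x ∈ (⊤ : Subgroup Q).lowerCentralSeries 1 := by
          rw [MonoidHom.mem_ker, hf, QuotientGroup.map_mk] at hq
          exact (QuotientGroup.eq_one_iff _).mp hq
        rw [Subgroup.mem_center_iff]
        intro y
        obtain ⟨z, rfl⟩ := QuotientGroup.mk_surjective y
        show ((z * x : Q) : Q ⧸ (⊤ : Subgroup Q).lowerCentralSeries 2) = ((x * z : Q) : _)
        rw [QuotientGroup.eq]
        have hmem : ⁅x⁻¹, z⁻¹⁆ ∈ (⊤ : Subgroup Q).lowerCentralSeries 2 := by
          rw [show (2 : ℕ) = 1 + 1 from rfl, Subgroup.lowerCentralSeries_succ]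
          exact Subgroup.commutator_mem_commutator (inv_mem hx) (Subgroup.mem_top z⁻¹)
        have : (z * x)⁻¹ * (x * z) = ⁅x⁻¹, z⁻¹⁆ := by
          rw [commutatorElement_def]; group
        rw [this]; exact hmem
      have hcomm := commutative_of_cyclic_center_quotient f hker
      have hle12 : (⊤ : Subgroup Q).lowerCentralSeries 1 ≤ (⊤ : Subgroup Q).lowerCentralSeries 2 := by
        have : commutator Q ≤ (⊤ : Subgroup Q).lowerCentralSeries 2 := by
          rw [_root_.commutator_def, Subgroup.commutator_le]
          intro x _ y _
          have h := hcomm (x : Q ⧸ (⊤ : Subgroup Q).lowerCentralSeries 2) (y : Q ⧸ (⊤ : Subgroup Q).lowerCentralSeries 2)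
          have : ((⁅x, y⁆ : Q) : Q ⧸ (⊤ : Subgroup Q).lowerCentralSeries 2) = 1 := by
            rw [commutatorElement_def]
            simp only [QuotientGroup.mk_mul, QuotientGroup.mk_inv]
            rw [h]; group
          exact (QuotientGroup.eq_one_iff _).mp this
        rw [Subgroup.top_lowerCentralSeries_one]; exact this
      have : (⊤ : Subgroup Q).lowerCentralSeries 1 = ⊥ :=
        lcs_eq_bot_of_stab (le_antisymm h21 hle12) hN
      exact h1 this
  exact pow_dvd_pow p hj2

end LCS

end CDAux

theorem stmt_19 (p n : ℕ) (hp : p.Prime) (G : Type*) [Group G] [Finite G]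
    (hcard : Nat.card G = p ^ n) (hn : 5 < n)
    (hmeta : IsMulCommutative (commutator G))
    (hmax₁ : (⊤ : Subgroup G).lowerCentralSeries (n - 1) = ⊥)
    (hmax₂ : ∀ k < n - 1, (⊤ : Subgroup G).lowerCentralSeries k ≠ ⊥)
    (hnoA : ¬ ∃ A : Subgroup G, IsMulCommutative A ∧ A.index = p) :
    (∀ T : Subgroup G, T.index = p → (Subgroup.center T).index = p ^ 2 →
      CD G = {H : Subgroup G | centerIn T ≤ H ∧ H ≤ T} ∧
      {H : Subgroup G | centerIn T < H ∧ H < T}.ncard = p + 1 ∧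
      (∀ H : Subgroup G, centerIn T < H → H < T →
        IsMulCommutative H ∧ Nat.card H = p ^ (n - 2)) ∧
      (centerIn T < commutator G ∧ commutator G < T) ∧
      (∀ H : Subgroup G, centerIn T < H → H < T → H ≠ commutator G →
        ¬ H.Normal)) ∧
    ((¬ ∃ T : Subgroup G, T.index = p ∧ (Subgroup.center T).index = p ^ 2) →
      CD G = {commutator G}) := by
  classical
  haveI : Fact p.Prime := ⟨hp⟩
  have hp1 : 1 < p := hp.one_lt
  have hpow : ∀ H : Subgroup G, ∃ k ≤ n, Nat.card H = p ^ k := by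
    intro H
    refine (Nat.dvd_prime_pow hp).mp ?_
    rw [← hcard]; exact Subgroup.card_subgroup_dvd_card H
  haveI hG_nil : Group.IsNilpotent G := nilpotent_iff_lowerCentralSeries.mpr ⟨n - 1, hmax₁⟩
  have hcomm_ne : (⊤ : Subgroup G).lowerCentralSeries 1 ≠ ⊥ := hmax₂ 1 (by omega)
  -- |G'| = p^(n-2)
  have hG'card : Nat.card (commutator G) = p ^ (n - 2) := by
    have hlow : p ^ (n - 2) ∣ Nat.card ((⊤ : Subgroup G).lowerCentralSeries 1) := by
      have h := CDAux.pow_dvd_card_lcs hp hcard hmax₁ (hmax₂ (n - 2) (by omega))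
        (n - 3) 1 (by omega)
      have h2 : n - 3 + 1 = n - 2 := by omega
      rwa [h2] at h
    have hidx : p ^ 2 ∣ ((⊤ : Subgroup G).lowerCentralSeries 1).index :=
      CDAux.commutator_index_dvd hp hcard hmax₁ hcomm_ne
    obtain ⟨a, han, ha⟩ := hpow ((⊤ : Subgroup G).lowerCentralSeries 1)
    have hidvd : ((⊤ : Subgroup G).lowerCentralSeries 1).index ∣ p ^ n := by
      rw [← hcard]
      exact ⟨Nat.card ((⊤ : Subgroup G).lowerCentralSeries 1), by
        rw [mul_comm]; exact (Subgroup.card_mul_index _).symm⟩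
    obtain ⟨b, hbn, hb⟩ := (Nat.dvd_prime_pow hp).mp hidvd
    have hab : a + b = n := by
      have h := Subgroup.card_mul_index ((⊤ : Subgroup G).lowerCentralSeries 1)
      rw [ha, hb, hcard, ← pow_add] at h
      exact Nat.pow_right_injective hp.two_le h
    have h1 : n - 2 ≤ a := (Nat.pow_dvd_pow_iff_le_right hp1).mp (ha ▸ hlow)
    have h2 : 2 ≤ b := (Nat.pow_dvd_pow_iff_le_right hp1).mp (hb ▸ hidx)
    have : a = n - 2 := by omega
    rw [← lowerCentralSeries_one, ha, this]
  -- |Z(G)| ≤ p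
  have hZle : Nat.card (Subgroup.center G) ≤ p := by
    set Z := Subgroup.center G with hZ
    obtain ⟨z, hzn, hz⟩ := hpow Z
    have hQcard : Nat.card (G ⧸ Z) = p ^ (n - z) := by
      have h := Subgroup.card_mul_index Z
      rw [hz, hcard] at h
      have h2 : p ^ z * p ^ (n - z) = p ^ n := by rw [← pow_add]; congr 1; omega
      have := Nat.eq_of_mul_eq_mul_left (pow_pos hp.pos z) (h.trans h2.symm)
      exact this
    haveI : Group.IsNilpotent (G ⧸ Z) :=
      nilpotent_of_surjective _ (QuotientGroup.mk'_surjective Z)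
    obtain ⟨N, hNQ⟩ := nilpotent_iff_lowerCentralSeries.mp this
    have hKQ : (⊤ : Subgroup (G ⧸ Z)).lowerCentralSeries (n - 3) ≠ ⊥ := by
      intro hbot
      have hmap := lowerCentralSeries.map (QuotientGroup.mk' Z) (n - 3)
      rw [hbot] at hmap
      have hsub : (⊤ : Subgroup G).lowerCentralSeries (n - 3) ≤ Z := by
        have h := (Subgroup.map_eq_bot_iff _).mp (le_bot_iff.mp hmap)
        rwa [QuotientGroup.ker_mk'] at h
      have hbot2 : (⊤ : Subgroup G).lowerCentralSeries (n - 2) = ⊥ := by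
        have hstep : n - 3 + 1 = n - 2 := by omega
        rw [← hstep]
        exact lowerCentralSeries_succ_eq_bot _ hsub
      exact hmax₂ (n - 2) (by omega) hbot2
    have h1Q : (⊤ : Subgroup (G ⧸ Z)).lowerCentralSeries 1 ≠ ⊥ := fun h =>
      hKQ (le_bot_iff.mp (h ▸ lowerCentralSeries_antitone _ (by omega : 1 ≤ n - 3)))
    have hlowQ : p ^ (n - 3) ∣ Nat.card ((⊤ : Subgroup (G ⧸ Z)).lowerCentralSeries 1) := by
      have h := CDAux.pow_dvd_card_lcs hp hQcard hNQ hKQ (n - 4) 1 (by omega)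
      have h2 : n - 4 + 1 = n - 3 := by omega
      rwa [h2] at h
    have hidxQ : p ^ 2 ∣ ((⊤ : Subgroup (G ⧸ Z)).lowerCentralSeries 1).index :=
      CDAux.commutator_index_dvd hp hQcard hNQ h1Q
    obtain ⟨a, _, ha⟩ := (Nat.dvd_prime_pow hp).mp
      (show Nat.card ((⊤ : Subgroup (G ⧸ Z)).lowerCentralSeries 1) ∣ p ^ (n - z) by
        rw [← hQcard]; exact Subgroup.card_subgroup_dvd_card _)
    have hidvd : ((⊤ : Subgroup (G ⧸ Z)).lowerCentralSeries 1).index ∣ p ^ (n - z) := by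
      rw [← hQcard]
      exact ⟨Nat.card ((⊤ : Subgroup (G ⧸ Z)).lowerCentralSeries 1), by
        rw [mul_comm]; exact (Subgroup.card_mul_index _).symm⟩
    obtain ⟨b, _, hb⟩ := (Nat.dvd_prime_pow hp).mp hidvd
    have hab : a + b = n - z := by
      have h := Subgroup.card_mul_index ((⊤ : Subgroup (G ⧸ Z)).lowerCentralSeries 1)
      rw [ha, hb, hQcard, ← pow_add] at h
      exact Nat.pow_right_injective hp.two_le h
    have h1 : n - 3 ≤ a := (Nat.pow_dvd_pow_iff_le_right hp1).mp (ha ▸ hlowQ)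
    have h2 : 2 ≤ b := (Nat.pow_dvd_pow_iff_le_right hp1).mp (hb ▸ hidxQ)
    have hz1 : z ≤ 1 := by omega
    calc Nat.card Z = p ^ z := hz
      _ ≤ p ^ 1 := Nat.pow_le_pow_right hp.pos hz1
      _ = p := pow_one p
  -- centralizer of G' is G'
  have hCG' : Subgroup.centralizer ((commutator G : Subgroup G) : Set G) = commutator G := by
    set C := Subgroup.centralizer ((commutator G : Subgroup G) : Set G) with hC
    have hle : commutator G ≤ C := Subgroup.le_centralizer_iff_isMulCommutative.mpr hmeta
    obtain ⟨c, hcn, hc⟩ := hpow C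
    have hclow : n - 2 ≤ c := by
      have := Subgroup.card_le_of_le hle
      rw [hG'card, hc] at this
      exact (Nat.pow_le_pow_iff_right hp1).mp this
    have hcn' : c ≠ n := by
      intro h
      have htop : C = ⊤ := Subgroup.eq_top_of_card_eq _ (by rw [hc, h, hcard])
      have hsub : commutator G ≤ Subgroup.center G := by
        intro x hx
        rw [Subgroup.mem_center_iff]
        intro g
        have hg : g ∈ C := by rw [htop]; trivial
        exact (Subgroup.mem_centralizer_iff.mp hg x hx).symm
      have hcle : Nat.card (commutator G) ≤ p := le_trans (Subgroup.card_le_of_le hsub) hZle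
      rw [hG'card] at hcle
      have h22 : n - 2 ≤ 1 := (Nat.pow_le_pow_iff_right hp1).mp (by rw [pow_one]; exact hcle)
      omega
    have hcn1 : c ≠ n - 1 := by
      intro h
      have hcomm : IsMulCommutative C := CDAux.isCommutative_of_center_small hp
        (commutator G) C hle le_rfl
        (by rw [hc, hG'card, h, ← pow_succ']; congr 1; omega)
      have hidx : C.index = p := by
        have hh := Subgroup.card_mul_index C
        rw [hc, h, hcard] at hh
        have h2 : p ^ (n - 1) * p = p ^ n := by rw [← pow_succ]; congr 1; omega
        exact Nat.eq_of_mul_eq_mul_left (pow_pos hp.pos _) (hh.trans h2.symm)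
      exact hnoA ⟨C, hcomm, hidx⟩
    have hc' : c = n - 2 := by omega
    exact (Subgroup.eq_of_le_of_card_ge hle (by rw [hc, hc', hG'card])).symm
  have hmG' : cdMeasure G (commutator G) = p ^ (2 * n - 4) := by
    unfold cdMeasure
    rw [hCG', hG'card, ← pow_add]; congr 1; omega
  have hcard_idx : ∀ T : Subgroup G, T.index = p → Nat.card T = p ^ (n - 1) := by
    intro T hT
    have h := Subgroup.card_mul_index T
    rw [hT, hcard] at h
    have h2 : p ^ (n - 1) * p = p ^ n := by rw [← pow_succ]; congr 1; omega
    exact Nat.eq_of_mul_eq_mul_right hp.pos (h.trans h2.symm)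
  have hidx_card : ∀ T : Subgroup G, Nat.card T = p ^ (n - 1) → T.index = p := by
    intro T hT
    have h := Subgroup.card_mul_index T
    rw [hT, hcard] at h
    have h2 : p ^ (n - 1) * p = p ^ n := by rw [← pow_succ]; congr 1; omega
    exact Nat.eq_of_mul_eq_mul_left (pow_pos hp.pos _) (h.trans h2.symm)
  have hnormal : ∀ T : Subgroup G, T.index = p → T.Normal ∧ commutator G ≤ T := by
    intro T hTp
    have hcardT := hcard_idx T hTp
    have hTne : T ≠ ⊤ := by
      intro h
      rw [h, Subgroup.index_top] at hTp
      omega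
    have hlt : T < Subgroup.normalizer (T : Set G) := by
      have hcond : NormalizerCondition G := normalizerCondition_of_isNilpotent
      exact hcond T (lt_top_iff_ne_top.mpr hTne)
    have hNtop : Subgroup.normalizer (T : Set G) = ⊤ := by
      obtain ⟨e, hen, he⟩ := hpow (Subgroup.normalizer (T : Set G))
      have h1 : Nat.card T < Nat.card (Subgroup.normalizer (T : Set G)) := CDAux.card_lt_of_lt hlt
      rw [hcardT, he] at h1
      have h2 : n - 1 < e := (Nat.pow_lt_pow_iff_right hp1).mp h1
      have he' : e = n := by omega
      exact Subgroup.eq_top_of_card_eq _ (by rw [he, he', hcard])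
    haveI hTN : T.Normal := Subgroup.normalizer_eq_top_iff.mp hNtop
    refine ⟨hTN, ?_⟩
    haveI : IsCyclic (G ⧸ T) :=
      isCyclic_of_prime_card (p := p) (show Nat.card (G ⧸ T) = p from hTp)
    have hcq : ∀ a b : G ⧸ T, a * b = b * a := fun a b =>
      (IsCyclic.commGroup (α := G ⧸ T)).mul_comm a b
    rw [_root_.commutator_def, Subgroup.commutator_le]
    intro x _ y _
    have h1 : ((⁅x, y⁆ : G) : G ⧸ T) = 1 := by
      rw [commutatorElement_def]
      simp only [QuotientGroup.mk_mul, QuotientGroup.mk_inv]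
      rw [hcq (x : G ⧸ T) (y : G ⧸ T)]
      group
    exact (QuotientGroup.eq_one_iff _).mp h1
  -- MASTER dichotomy
  obtain ⟨A, hA_CD, hA_comm, hA_minmax⟩ := CDAux.CD_min (G := G)
  set M := Subgroup.centralizer (A : Set G) with hM
  have hAleM : A ≤ M := Subgroup.le_centralizer_iff_isMulCommutative.mpr hA_comm
  obtain ⟨a, han, hcardA⟩ := hpow A
  obtain ⟨c, hcn, hcardM⟩ := hpow M
  have hmA : cdMeasure G A = p ^ (a + c) := by
    unfold cdMeasure
    rw [hcardA, ← hM, hcardM, pow_add]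
  have hge : 2 * n - 4 ≤ a + c := by
    have h := hA_CD (commutator G)
    rw [hmG', hmA] at h
    exact (Nat.pow_le_pow_iff_right hp1).mp h
  have hc_ne_n : c ≠ n := by
    intro hcn'
    have htop : M = ⊤ := Subgroup.eq_top_of_card_eq _ (by rw [hcardM, hcn', hcard])
    have hAZ : A ≤ Subgroup.center G := by
      intro x hx
      rw [Subgroup.mem_center_iff]
      intro g
      have hg : g ∈ M := by rw [htop]; trivial
      exact (Subgroup.mem_centralizer_iff.mp hg x hx).symm
    have hcard_le : Nat.card A ≤ p := le_trans (Subgroup.card_le_of_le hAZ) hZle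
    rw [hcardA] at hcard_le
    have ha1 : a ≤ 1 := (Nat.pow_le_pow_iff_right hp1).mp (by rw [pow_one]; exact hcard_le)
    omega
  have hac : a ≤ c := (Nat.pow_le_pow_iff_right hp1).mp
    (by rw [← hcardA, ← hcardM]; exact Subgroup.card_le_of_le hAleM)
  have ha_ne_n : a ≠ n := by
    intro h
    have htopA : A = ⊤ := Subgroup.eq_top_of_card_eq _ (by rw [hcardA, h, hcard])
    have hbot : (⊤ : Subgroup G).lowerCentralSeries 1 = ⊥ := by
      rw [lowerCentralSeries_one, _root_.commutator_def, eq_bot_iff, Subgroup.commutator_le]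
      intro x _ y _
      rw [Subgroup.mem_bot]
      have hx : x ∈ A := by rw [htopA]; trivial
      have hy : y ∈ A := by rw [htopA]; trivial
      have hcomm := hA_comm.is_comm.comm ⟨x, hx⟩ ⟨y, hy⟩
      have hxy : x * y = y * x := congrArg Subtype.val hcomm
      rw [commutatorElement_def, hxy]
      group
    exact hcomm_ne hbot
  have ha_ne_n1 : a ≠ n - 1 := by
    intro h
    exact hnoA ⟨A, hA_comm, hidx_card A (by rw [hcardA, h])⟩
  have ha_le : a ≤ n - 2 := by omega
  have ha_ge : n - 3 ≤ a := by omega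
  have hdich : (Nat.card A = p ^ (n - 2) ∧ M = A) ∨
      (Nat.card A = p ^ (n - 3) ∧ Nat.card M = p ^ (n - 1) ∧ M.index = p ∧
        (Subgroup.center ↥M).index = p ^ 2) := by
    rcases (by omega : a = n - 2 ∨ a = n - 3) with h | h
    · left
      have hcc : c = n - 2 ∨ c = n - 1 := by omega
      rcases hcc with hc' | hc'
      · exact ⟨by rw [hcardA, h],
          (Subgroup.eq_of_le_of_card_ge hAleM (by rw [hcardA, hcardM, h, hc'])).symm⟩
      · exfalso
        have hMcomm : IsMulCommutative M := CDAux.isCommutative_of_center_small hp A M hAleM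
          le_rfl (by rw [hcardA, hcardM, h, hc', ← pow_succ']; congr 1; omega)
        exact hnoA ⟨M, hMcomm, hidx_card M (by rw [hcardM, hc'])⟩
    · right
      have hc' : c = n - 1 := by omega
      have hMidx : M.index = p := hidx_card M (by rw [hcardM, hc'])
      refine ⟨by rw [hcardA, h], by rw [hcardM, hc'], hMidx, ?_⟩
      have hAsub : A.subgroupOf M ≤ Subgroup.center ↥M := by
        rintro ⟨x, hxM⟩ hx
        rw [Subgroup.mem_subgroupOf] at hx
        rw [Subgroup.mem_center_iff]
        rintro ⟨g, hgM⟩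
        exact Subtype.ext (Subgroup.mem_centralizer_iff.mp hgM x hx).symm
      have hcardZM : p ^ (n - 3) ≤ Nat.card (Subgroup.center ↥M) := by
        have h1 : Nat.card (A.subgroupOf M) = Nat.card A :=
          Nat.card_congr (Subgroup.subgroupOfEquivOfLe hAleM).toEquiv
        calc p ^ (n - 3) = Nat.card A := by rw [hcardA, h]
          _ = Nat.card (A.subgroupOf M) := h1.symm
          _ ≤ _ := Subgroup.card_le_of_le hAsub
      obtain ⟨i, hin, hi⟩ := (Nat.dvd_prime_pow hp).mp
        (show Nat.card (Subgroup.center ↥M) ∣ p ^ (n - 1) by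
          rw [← hc', ← hcardM]; exact Subgroup.card_subgroup_dvd_card _)
      have hidvd : (Subgroup.center ↥M).index ∣ p ^ (n - 1) := by
        rw [← hc', ← hcardM]
        exact ⟨Nat.card (Subgroup.center ↥M), by
          rw [mul_comm]; exact (Subgroup.card_mul_index _).symm⟩
      obtain ⟨j, hjn, hj⟩ := (Nat.dvd_prime_pow hp).mp hidvd
      have hij : i + j = n - 1 := by
        have hmul := Subgroup.card_mul_index (Subgroup.center ↥M)
        rw [hi, hj, hcardM, hc', ← pow_add] at hmul
        exact Nat.pow_right_injective hp.two_le hmul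
      have hi3 : n - 3 ≤ i := (Nat.pow_le_pow_iff_right hp1).mp (by rw [← hi]; exact hcardZM)
      have hj2 : j ≤ 2 := by omega
      have hj0 : j ≠ 0 := by
        intro h0
        have : (Subgroup.center ↥M).index = 1 := by rw [hj, h0, pow_zero]
        have htop : Subgroup.center ↥M = ⊤ := Subgroup.index_eq_one.mp this
        exact hnoA ⟨M, CDAux.isCommutative_of_center_top M htop, hMidx⟩
      have hj1 : j ≠ 1 := by
        intro h1
        have : (Subgroup.center ↥M).index = p := by rw [hj, h1, pow_one]
        exact hnoA ⟨M, CDAux.isCommutative_of_center_index_p hp M this, hMidx⟩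
      have : j = 2 := by omega
      rw [hj, this]
  have hmA4 : cdMeasure G A = p ^ (2 * n - 4) := by
    rcases hdich with ⟨h1, h2⟩ | ⟨h1, h2, _, _⟩
    · unfold cdMeasure
      rw [← hM, h2, h1, ← pow_add]; congr 1; omega
    · unfold cdMeasure
      rw [← hM, h1, h2, ← pow_add]; congr 1; omega
  have hbound : ∀ K : Subgroup G, cdMeasure G K ≤ p ^ (2 * n - 4) := fun K => by
    rw [← hmA4]; exact hA_CD K
  constructor
  · -- part (a)
    intro T hTp hTZ
    have hcardT : Nat.card T = p ^ (n - 1) := hcard_idx T hTp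
    have hZcard : Nat.card (centerIn T) = p ^ (n - 3) := by
      rw [CDAux.card_centerIn]
      have h := Subgroup.card_mul_index (Subgroup.center ↥T)
      rw [hTZ, hcardT] at h
      have hmul : p ^ (n - 3) * p ^ 2 = p ^ (n - 1) := by rw [← pow_add]; congr 1; omega
      exact Nat.eq_of_mul_eq_mul_right (pow_pos hp.pos 2) (h.trans hmul.symm)
    set Z := centerIn T with hZdef
    have hZT : Z ≤ T := by rw [hZdef, CDAux.centerIn_eq]; exact inf_le_right
    have hZcT : Z ≤ Subgroup.centralizer (T : Set G) := by
      rw [hZdef, CDAux.centerIn_eq]; exact inf_le_left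
    have hTcZ : T ≤ Subgroup.centralizer (Z : Set G) := Subgroup.le_centralizer_iff.mpr hZcT
    have hT_not_comm : ¬ IsMulCommutative T := fun h => hnoA ⟨T, h, hTp⟩
    have hCZ : Subgroup.centralizer (Z : Set G) = T := by
      obtain ⟨e, hen, he⟩ := hpow (Subgroup.centralizer (Z : Set G))
      have h1 : p ^ (n - 1) ≤ p ^ e := by
        rw [← hcardT, ← he]; exact Subgroup.card_le_of_le hTcZ
      have he1 : n - 1 ≤ e := (Nat.pow_le_pow_iff_right hp1).mp h1
      have hne : e ≠ n := by
        intro h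
        have htop : Subgroup.centralizer (Z : Set G) = ⊤ :=
          Subgroup.eq_top_of_card_eq _ (by rw [he, h, hcard])
        have hZcenter : Z ≤ Subgroup.center G := by
          intro x hx
          rw [Subgroup.mem_center_iff]
          intro g
          have hg : g ∈ Subgroup.centralizer (Z : Set G) := by rw [htop]; trivial
          exact (Subgroup.mem_centralizer_iff.mp hg x hx).symm
        have h2 : Nat.card Z ≤ p := le_trans (Subgroup.card_le_of_le hZcenter) hZle
        rw [hZcard] at h2
        have h3 : n - 3 ≤ 1 := (Nat.pow_le_pow_iff_right hp1).mp (by rw [pow_one]; exact h2)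
        omega
      have he' : e = n - 1 := by omega
      exact (Subgroup.eq_of_le_of_card_ge hTcZ (by rw [he, he', hcardT])).symm
    have hCT : Subgroup.centralizer (T : Set G) = Z := by
      apply le_antisymm
      · rw [hZdef, CDAux.centerIn_eq]
        refine le_inf le_rfl ?_
        calc Subgroup.centralizer (T : Set G)
            ≤ Subgroup.centralizer (Z : Set G) :=
              Subgroup.centralizer_le (SetLike.coe_subset_coe.mpr hZT)
          _ = T := hCZ
      · exact hZcT
    have hmZ : cdMeasure G Z = p ^ (2 * n - 4) := by
      unfold cdMeasure
      rw [hZcard, hCZ, hcardT, ← pow_add]; congr 1; omega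
    have hmT : cdMeasure G T = p ^ (2 * n - 4) := by
      unfold cdMeasure
      rw [hcardT, hCT, hZcard, ← pow_add]; congr 1; omega
    have hZCD : Z ∈ CD G := fun K => by rw [hmZ]; exact hbound K
    have hTCD : T ∈ CD G := fun K => by rw [hmT]; exact hbound K
    have hZneT : Z ≠ T := by
      intro h
      have h1 := hZcard
      rw [h, hcardT] at h1
      have := Nat.pow_right_injective hp.two_le h1
      omega
    have hbetween : ∀ H : Subgroup G, Z < H → H < T →
        IsMulCommutative H ∧ Nat.card H = p ^ (n - 2) ∧
          Subgroup.centralizer (H : Set G) = H := by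
      intro H h1 h2
      obtain ⟨h, hhn, hh⟩ := hpow H
      have hlow : p ^ (n - 3) < p ^ h := by
        rw [← hZcard, ← hh]; exact CDAux.card_lt_of_lt h1
      have hhigh : p ^ h < p ^ (n - 1) := by
        rw [← hh, ← hcardT]; exact CDAux.card_lt_of_lt h2
      have hh' : h = n - 2 := by
        have l1 := (Nat.pow_lt_pow_iff_right hp1).mp hlow
        have l2 := (Nat.pow_lt_pow_iff_right hp1).mp hhigh
        omega
      have hcardH : Nat.card H = p ^ (n - 2) := by rw [hh, hh']
      have hHcomm : IsMulCommutative H := CDAux.isCommutative_of_center_small hp Z H h1.le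
        (le_trans h2.le hTcZ) (by rw [hcardH, hZcard, ← pow_succ']; congr 1; omega)
      refine ⟨hHcomm, hcardH, ?_⟩
      have hHle : H ≤ Subgroup.centralizer (H : Set G) :=
        Subgroup.le_centralizer_iff_isMulCommutative.mpr hHcomm
      have hCHle : Subgroup.centralizer (H : Set G) ≤ T := by
        rw [← hCZ]
        exact Subgroup.centralizer_le (SetLike.coe_subset_coe.mpr h1.le)
      obtain ⟨e, hen, he⟩ := hpow (Subgroup.centralizer (H : Set G))
      have l1 : n - 2 ≤ e := (Nat.pow_le_pow_iff_right hp1).mp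
        (by rw [← hcardH, ← he]; exact Subgroup.card_le_of_le hHle)
      have l2 : e ≤ n - 1 := (Nat.pow_le_pow_iff_right hp1).mp
        (by rw [← he, ← hcardT]; exact Subgroup.card_le_of_le hCHle)
      have hne : e ≠ n - 1 := by
        intro hee
        have hCHT : Subgroup.centralizer (H : Set G) = T :=
          Subgroup.eq_of_le_of_card_ge hCHle (by rw [he, hee, hcardT])
        have hHZ : H ≤ Z := by
          rw [hZdef, CDAux.centerIn_eq]
          refine le_inf ?_ h2.le
          exact Subgroup.le_centralizer_iff.mpr (le_of_eq hCHT.symm)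
        exact lt_irrefl Z (lt_of_lt_of_le h1 hHZ)
      have he' : e = n - 2 := by omega
      exact (Subgroup.eq_of_le_of_card_ge hHle (by rw [he, he', hcardH])).symm
    have hcase2 : Nat.card A = p ^ (n - 3) ∧ Nat.card M = p ^ (n - 1) ∧ M.index = p ∧
        (Subgroup.center ↥M).index = p ^ 2 := by
      rcases hdich with ⟨hA2, hMA⟩ | h2
      · exfalso
        have hZA : Z = A := by
          have h1 := hA_minmax Z hZCD
          have h2 : Z ≤ A := hMA ▸ h1.2
          exact le_antisymm h2 h1.1
        have hTA : T = A := by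
          have h1 := hA_minmax T hTCD
          have h2 : T ≤ A := hMA ▸ h1.2
          exact le_antisymm h2 h1.1
        exact hZneT (hZA.trans hTA.symm)
      · exact h2
    obtain ⟨hcA3, hcM, hMidx, hZMidx⟩ := hcase2
    have hTM : T = M := by
      have h1 := (hA_minmax T hTCD).2
      exact Subgroup.eq_of_le_of_card_ge h1 (by rw [hcM, hcardT])
    have hAZeq : A = Z := by
      have h1 := (hA_minmax Z hZCD).1
      exact Subgroup.eq_of_le_of_card_ge h1 (by rw [hcA3, hZcard])
    have hCD_eq : CD G = {H : Subgroup G | Z ≤ H ∧ H ≤ T} := by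
      ext H
      constructor
      · intro hH
        obtain ⟨hAH, hHM⟩ := hA_minmax H hH
        exact ⟨hAZeq ▸ hAH, hTM ▸ hHM⟩
      · rintro ⟨hl, hr⟩
        rcases eq_or_lt_of_le hl with h | h
        · exact h ▸ hZCD
        rcases eq_or_lt_of_le hr with h' | h'
        · exact h' ▸ hTCD
        · obtain ⟨hHcomm, hcardH, hCH⟩ := hbetween H h h'
          intro K
          have hmH : cdMeasure G H = p ^ (2 * n - 4) := by
            unfold cdMeasure
            rw [hCH, hcardH, ← pow_add]; congr 1; omega
          rw [hmH]; exact hbound K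
    have hG'T : commutator G ≤ T := (hnormal T hTp).2
    have hZG' : Z ≤ commutator G := by
      calc Z ≤ Subgroup.centralizer (T : Set G) := hZcT
        _ ≤ Subgroup.centralizer ((commutator G : Subgroup G) : Set G) :=
            Subgroup.centralizer_le (SetLike.coe_subset_coe.mpr hG'T)
        _ = commutator G := hCG'
    have hZltG' : Z < commutator G := by
      refine lt_of_le_of_ne hZG' ?_
      intro h
      have h1 := hG'card
      rw [← h, hZcard] at h1
      have := Nat.pow_right_injective hp.two_le h1
      omega
    have hG'ltT : commutator G < T := by
      refine lt_of_le_of_ne hG'T ?_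
      intro h
      have h1 := hG'card
      rw [h, hcardT] at h1
      have := Nat.pow_right_injective hp.two_le h1
      omega
    have hnonnormal : ∀ H : Subgroup G, Z < H → H < T → H ≠ commutator G →
        ¬ H.Normal := by
      intro H h1 h2 hne hnorm
      have hcardH := (hbetween H h1 h2).2.1
      have hidxH : H.index = p ^ 2 := by
        have hmul := Subgroup.card_mul_index H
        rw [hcardH, hcard] at hmul
        have h3 : p ^ (n - 2) * p ^ 2 = p ^ n := by rw [← pow_add]; congr 1; omega
        exact Nat.eq_of_mul_eq_mul_left (pow_pos hp.pos _) (hmul.trans h3.symm)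
      haveI := hnorm
      have hcommQ : ∀ a b : G ⧸ H, a * b = b * a :=
        IsPGroup.commutative_of_card_eq_prime_sq (show Nat.card (G ⧸ H) = p ^ 2 from hidxH)
      have hle : commutator G ≤ H := by
        rw [_root_.commutator_def, Subgroup.commutator_le]
        intro x _ y _
        have h3 : ((⁅x, y⁆ : G) : G ⧸ H) = 1 := by
          rw [commutatorElement_def]
          simp only [QuotientGroup.mk_mul, QuotientGroup.mk_inv]
          rw [hcommQ (x : G ⧸ H) (y : G ⧸ H)]
          group
        exact (QuotientGroup.eq_one_iff _).mp h3
      exact hne (Subgroup.eq_of_le_of_card_ge hle (by rw [hcardH, hG'card])).symm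
    have hcount : {H : Subgroup G | Z < H ∧ H < T}.ncard = p + 1 := by
      set S : Set (Subgroup G) := {H : Subgroup G | Z < H ∧ H < T} with hSdef
      have hzpcomm : ∀ x : G, Subgroup.zpowers x ≤
          Subgroup.centralizer ((Subgroup.zpowers x : Subgroup G) : Set G) := by
        intro x y hy
        rw [Subgroup.mem_centralizer_iff]
        intro h hh
        obtain ⟨k, rfl⟩ := Subgroup.mem_zpowers_iff.mp hy
        obtain ⟨m, rfl⟩ := Subgroup.mem_zpowers_iff.mp hh
        rw [← zpow_add, ← zpow_add, add_comm]
      have hHx : ∀ x : G, x ∈ T → x ∉ Z → (Z ⊔ Subgroup.zpowers x) ∈ S := by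
        intro x hxT hxZ
        have hle : Z ⊔ Subgroup.zpowers x ≤ T := sup_le hZT (by rwa [Subgroup.zpowers_le])
        have hZlt : Z < Z ⊔ Subgroup.zpowers x := by
          refine lt_of_le_of_ne le_sup_left ?_
          intro h
          exact hxZ (h ▸ Subgroup.mem_sup_right (Subgroup.mem_zpowers x))
        have hneT : Z ⊔ Subgroup.zpowers x ≠ T := by
          intro h
          apply hT_not_comm
          rw [← Subgroup.le_centralizer_iff_isMulCommutative, ← h, CDAux.centralizer_sup']
          refine sup_le (le_inf ?_ ?_) (le_inf ?_ ?_)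
          · exact le_trans hZT hTcZ
          · refine le_trans hZcT (Subgroup.centralizer_le ?_)
            exact SetLike.coe_subset_coe.mpr (by rwa [Subgroup.zpowers_le])
          · exact le_trans (by rwa [Subgroup.zpowers_le]) hTcZ
          · exact hzpcomm x
        exact ⟨hZlt, lt_of_le_of_ne hle hneT⟩
      have hfiber_iff : ∀ (x : G) (H : Subgroup G), H ∈ S →
          ((x ∈ T ∧ x ∉ Z) ∧ Z ⊔ Subgroup.zpowers x = H ↔ x ∈ H ∧ x ∉ Z) := by
        intro x H hHS
        constructor
        · rintro ⟨⟨hxT, hxZ⟩, rfl⟩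
          exact ⟨Subgroup.mem_sup_right (Subgroup.mem_zpowers x), hxZ⟩
        · rintro ⟨hxH, hxZ⟩
          have hxT : x ∈ T := hHS.2.le hxH
          refine ⟨⟨hxT, hxZ⟩, ?_⟩
          have h1 : Z ⊔ Subgroup.zpowers x ≤ H :=
            sup_le hHS.1.le (by rwa [Subgroup.zpowers_le])
          have hS1 := hHx x hxT hxZ
          have hc1 : Nat.card ↥(Z ⊔ Subgroup.zpowers x) = p ^ (n - 2) :=
            (hbetween _ hS1.1 hS1.2).2.1
          have hc2 : Nat.card H = p ^ (n - 2) := (hbetween H hHS.1 hHS.2).2.1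
          exact Subgroup.eq_of_le_of_card_ge h1 (by rw [hc1, hc2])
      have hSfin : S.Finite := Set.toFinite S
      have hsd : ((T : Set G) \ (Z : Set G)).Finite := Set.toFinite _
      have hmem : ∀ x ∈ hsd.toFinset, (Z ⊔ Subgroup.zpowers x) ∈ hSfin.toFinset := by
        intro x hx
        rw [Set.Finite.mem_toFinset] at hx ⊢
        exact hHx x hx.1 hx.2
      have hkey := Finset.card_eq_sum_card_fiberwise hmem
      have hcard_coe : ∀ K : Subgroup G, (K : Set G).ncard = Nat.card K := by
        intro K
        exact (Nat.card_coe_set_eq _).symm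
      have hfibers : ∀ H ∈ hSfin.toFinset,
          (hsd.toFinset.filter (fun x => Z ⊔ Subgroup.zpowers x = H)).card =
            p ^ (n - 2) - p ^ (n - 3) := by
        intro H hH
        rw [Set.Finite.mem_toFinset] at hH
        have heq : hsd.toFinset.filter (fun x => Z ⊔ Subgroup.zpowers x = H) =
            ((H : Set G) \ (Z : Set G)).toFinite.toFinset := by
          ext x
          rw [Finset.mem_filter, Set.Finite.mem_toFinset, Set.Finite.mem_toFinset]
          simp only [Set.mem_diff, SetLike.mem_coe]
          exact hfiber_iff x H hH
        rw [heq, ← Set.ncard_eq_toFinset_card _ ((H : Set G) \ (Z : Set G)).toFinite]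
        rw [Set.ncard_diff (SetLike.coe_subset_coe.mpr hH.1.le)]
        rw [hcard_coe H, hcard_coe Z, (hbetween H hH.1 hH.2).2.1, hZcard]
      have hsum : hsd.toFinset.card = hSfin.toFinset.card * (p ^ (n - 2) - p ^ (n - 3)) := by
        rw [hkey, Finset.sum_congr rfl hfibers, Finset.sum_const, smul_eq_mul]
      have hsd_card : hsd.toFinset.card = p ^ (n - 1) - p ^ (n - 3) := by
        rw [← Set.ncard_eq_toFinset_card _ hsd,
          Set.ncard_diff (SetLike.coe_subset_coe.mpr hZT), hcard_coe T, hcard_coe Z,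
          hcardT, hZcard]
      have hS_card : S.ncard = hSfin.toFinset.card := Set.ncard_eq_toFinset_card _ hSfin
      rw [hS_card]
      set t := hSfin.toFinset.card with ht
      have key : p ^ (n - 1) - p ^ (n - 3) = t * (p ^ (n - 2) - p ^ (n - 3)) := by
        rw [← hsd_card, hsum]
      set q := p ^ (n - 3) with hq
      have e1 : p * p * q = p ^ (n - 1) := by
        rw [hq, mul_assoc, ← pow_succ', ← pow_succ']; congr 1; omega
      have e2 : p * q = p ^ (n - 2) := by
        rw [hq, ← pow_succ']; congr 1; omega
      have hkey2 : (p * p - 1) * q = t * ((p - 1) * q) := by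
        have l : (p * p - 1) * q = p * p * q - q := by rw [Nat.sub_mul, one_mul]
        have r : (p - 1) * q = p * q - q := by rw [Nat.sub_mul, one_mul]
        rw [l, r, e1, e2]
        exact key
      have hfac : p * p - 1 = (p + 1) * (p - 1) := by
        have h' : p * p = (p + 1) * (p - 1) + 1 := by
          obtain ⟨k, rfl⟩ : ∃ k, p = k + 1 := ⟨p - 1, by omega⟩
          simp only [Nat.add_sub_cancel]
          ring
        exact Nat.sub_eq_of_eq_add h'
      rw [hfac, mul_assoc] at hkey2
      have hqpos : 0 < (p - 1) * q := by
        have : 0 < q := by rw [hq]; positivity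
        have : 0 < p - 1 := by omega
        positivity
      exact (Nat.eq_of_mul_eq_mul_right hqpos hkey2).symm
    exact ⟨hCD_eq, hcount, fun H h1 h2 =>
      ⟨(hbetween H h1 h2).1, (hbetween H h1 h2).2.1⟩, ⟨hZltG', hG'ltT⟩, hnonnormal⟩
  · -- part (b)
    intro hnoT
    rcases hdich with ⟨hA2, hMA⟩ | ⟨_, _, hMidx, hZM⟩
    · have hG'CD : commutator G ∈ CD G := fun K => by rw [hmG']; exact hbound K
      have hA_eq : A = commutator G := by
        have h1 := hA_minmax _ hG'CD
        have h2 : commutator G ≤ A := hMA ▸ h1.2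
        exact le_antisymm h1.1 h2
      ext H
      simp only [Set.mem_singleton_iff]
      constructor
      · intro hH
        have h1 := hA_minmax H hH
        have h2 : H ≤ A := hMA ▸ h1.2
        rw [← hA_eq]
        exact (le_antisymm h1.1 h2).symm
      · rintro rfl
        exact hG'CD
    · exact absurd ⟨M, hMidx, hZM⟩ hnoT
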